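/- For nonnegative integers n, r1, r2 with r1 ≤ r2, the (r1,r2)-Bell polynomial satisfies B_n(z; r1, r2) = exp(-z) · Σ_{k≥0} (k+r2)^n · (k+r2)(k+r2-1)···(k+r2-r1+1) · z^k/k! (as a convergent series identity for all real z). -/

import Mathlib

open Finset

/-- `𝒜` is a set partition of `Fin N`: blocks are nonempty and every element
lies in exactly one block. -/
def IsSetPartition {N : ℕ} (𝒜 : Finset (Finset (Fin N))) : Prop :=
  (∀ t ∈ 𝒜, t.Nonempty) ∧ ∀ x : Fin N, ∃! t, t ∈ 𝒜 ∧ x ∈ t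

/-- The elements of `S` lie in pairwise distinct blocks of `𝒜`. -/
def DistinctBlocks {N : ℕ} (𝒜 : Finset (Finset (Fin N))) (S : Set (Fin N)) : Prop :=
  ∀ a ∈ S, ∀ b ∈ S, a ≠ b → ∀ t ∈ 𝒜, ¬(a ∈ t ∧ b ∈ t)

/-- The `r`-Stirling number of the second kind `{n+r brace k+r}_r`: the number of
partitions of `{1,…,n+r}` into `k+r` nonempty blocks with `1,…,r` in distinct blocks. -/
noncomputable def rStirling (r n k : ℕ) : ℕ :=
  Nat.card {𝒜 : Finset (Finset (Fin (n + r))) //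
    IsSetPartition 𝒜 ∧ 𝒜.card = k + r ∧ DistinctBlocks 𝒜 {x | (x : ℕ) < r}}

/-- The `(r₁,r₂)`-Stirling number of the second kind `{n+r₁+r₂ brace k+r₂}_{r₁,r₂}`. -/
noncomputable def rrStirling (r₁ r₂ n k : ℕ) : ℕ :=
  Nat.card {𝒜 : Finset (Finset (Fin (n + r₁ + r₂))) //
    IsSetPartition 𝒜 ∧ 𝒜.card = k + r₂ ∧
    DistinctBlocks 𝒜 {x | (x : ℕ) < r₁} ∧
    DistinctBlocks 𝒜 {x | r₁ ≤ (x : ℕ) ∧ (x : ℕ) < r₁ + r₂}}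

/-- The `r`-Bell polynomial `B_n(z;r) = Σ_{k=0}^n {n+r brace k+r}_r z^k`. -/
noncomputable def rBell (r n : ℕ) (z : ℝ) : ℝ :=
  ∑ k ∈ range (n + 1), (rStirling r n k : ℝ) * z ^ k

/-- The `(r₁,r₂)`-Bell polynomial `B_n(z;r₁,r₂) = Σ_{k=0}^{n+r₁} {n+r₁+r₂ brace k+r₂}_{r₁,r₂} z^k`. -/
noncomputable def rrBell (r₁ r₂ n : ℕ) (z : ℝ) : ℝ :=
  ∑ k ∈ range (n + r₁ + 1), (rrStirling r₁ r₂ n k : ℝ) * z ^ k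


namespace RRaux

lemma descF_mul_factorial (j k : ℕ) : (k + j).descFactorial j * k.factorial = (k + j).factorial := by
  induction j with
  | zero => simp
  | succ j ih =>
    have : k + (j+1) = (k + j) + 1 := by ring
    rw [this, Nat.succ_descFactorial_succ, Nat.factorial_succ, mul_assoc, ih]

lemma descF_real (j k : ℕ) :
    (Nat.descFactorial (k + j) j : ℝ) * z ^ (k + j) / (k + j).factorial
      = z ^ j * (z ^ k / k.factorial) := by
  have hk : (k.factorial : ℝ) ≠ 0 := Nat.cast_ne_zero.2 k.factorial_ne_zero
  have hkj : ((k+j).factorial : ℝ) ≠ 0 := Nat.cast_ne_zero.2 (k+j).factorial_ne_zero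
  have h2 : ((k+j).descFactorial j : ℝ) * k.factorial = (k+j).factorial := by
    exact_mod_cast congrArg Nat.cast (descF_mul_factorial j k)
  rw [show ((k+j).descFactorial j : ℝ) = (k+j).factorial / k.factorial from by
    rw [eq_div_iff hk]; exact h2]
  field_simp
  rw [pow_add]
  ring

lemma prod_range_cast_sub (x r : ℕ) : ∏ i ∈ range r, ((x:ℝ) - i) = (x.descFactorial r : ℝ) := by
  induction r with
  | zero => simp
  | succ r ih =>
    rw [prod_range_succ, ih, Nat.descFactorial_succ]
    rcases lt_or_ge r x with hr | hr
    · push_cast [Nat.cast_sub hr.le]; ring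
    · have h1 : x - r = 0 := by omega
      have h2 : (x.descFactorial r : ℝ) = 0 ∨ ((x:ℝ) - r) = 0 := by
        rcases eq_or_lt_of_le hr with h | h
        · right; rw [h]; ring
        · left; rw [Nat.descFactorial_eq_zero_iff_lt.2 h]; simp
      rcases h2 with h2 | h2 <;> rw [h1] <;> simp [h2]

lemma summable_descF (j : ℕ) (z : ℝ) :
    Summable (fun k => (Nat.descFactorial k j : ℝ) * z ^ k / k.factorial) := by
  rw [← summable_nat_add_iff j]
  have heq : (fun k => (Nat.descFactorial (k + j) j : ℝ) * z ^ (k + j) / (k + j).factorial)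
      = fun k => z ^ j * (z ^ k / k.factorial) := by
    funext k; exact descF_real j k
  rw [heq]
  exact (Real.summable_pow_div_factorial z).mul_left _

lemma tsum_descF (j : ℕ) (z : ℝ) :
    ∑' k : ℕ, (Nat.descFactorial k j : ℝ) * z ^ k / k.factorial = z ^ j * Real.exp z := by
  have hs := summable_descF j z
  have h := hs.sum_add_tsum_nat_add j
  have h0 : ∑ i ∈ range j, (Nat.descFactorial i j : ℝ) * z ^ i / i.factorial = 0 := by
    apply Finset.sum_eq_zero
    intro i hi
    rw [Nat.descFactorial_eq_zero_iff_lt.2 (mem_range.1 hi)]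
    simp
  rw [h0, zero_add] at h
  rw [← h]
  have heq : (fun k => (Nat.descFactorial (k + j) j : ℝ) * z ^ (k + j) / (k + j).factorial)
      = fun k => z ^ j * (z ^ k / k.factorial) := by
    funext k; exact descF_real j k
  rw [heq, tsum_mul_left, Real.exp_eq_exp_ℝ, NormedSpace.exp_eq_tsum_div]

section Blocks
variable {N : ℕ} {𝒜 : Finset (Finset (Fin N))}

lemma block_eq_block (h : IsSetPartition 𝒜) {t t' : Finset (Fin N)} {x : Fin N}
    (ht : t ∈ 𝒜) (ht' : t' ∈ 𝒜) (hx : x ∈ t) (hx' : x ∈ t') : t = t' :=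
  ((h.2 x).unique ⟨ht, hx⟩ ⟨ht', hx'⟩)

noncomputable def blockOf (h : IsSetPartition 𝒜) (x : Fin N) : Finset (Fin N) :=
  (h.2 x).exists.choose

lemma blockOf_mem (h : IsSetPartition 𝒜) (x : Fin N) : blockOf h x ∈ 𝒜 :=
  (h.2 x).exists.choose_spec.1

lemma mem_blockOf (h : IsSetPartition 𝒜) (x : Fin N) : x ∈ blockOf h x :=
  (h.2 x).exists.choose_spec.2

lemma blockOf_eq (h : IsSetPartition 𝒜) {t : Finset (Fin N)} {x : Fin N}
    (ht : t ∈ 𝒜) (hx : x ∈ t) : blockOf h x = t :=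
  block_eq_block h (blockOf_mem h x) ht (mem_blockOf h x) hx

noncomputable def rep (t : Finset (Fin N)) (ht : t.Nonempty) : Fin N := ht.choose

lemma rep_mem (t : Finset (Fin N)) (ht : t.Nonempty) : rep t ht ∈ t := ht.choose_spec

/-- a partition has at most `N` blocks -/
lemma card_le_of_partition (h : IsSetPartition 𝒜) : 𝒜.card ≤ N := by
  have hinj : Function.Injective (fun t : {t // t ∈ 𝒜} => rep t.1 (h.1 t.1 t.2)) := by
    intro t t' heq
    simp only at heq
    refine Subtype.ext (block_eq_block h t.2 t'.2 (rep_mem t.1 (h.1 t.1 t.2)) ?_)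
    rw [heq]
    exact rep_mem t'.1 (h.1 t'.1 t'.2)
  have := Fintype.card_le_of_injective _ hinj
  simpa [Fintype.card_coe] using this

end Blocks

section Comb
variable (n r1 r2 m : ℕ)

attribute [local instance] Classical.propDecidable

def Pf (f : Fin (n+r1+r2) → Fin (m+r2)) : Prop :=
  (∀ a b : Fin (n+r1+r2), (a:ℕ) < r1 → (b:ℕ) < r1 → f a = f b → a = b) ∧
  ∀ x : Fin (n+r1+r2), r1 ≤ (x:ℕ) → (x:ℕ) < r1 + r2 → (f x : ℕ) = m + ((x:ℕ) - r1)

def fiber (f : Fin (n+r1+r2) → Fin (m+r2)) (x : Fin (n+r1+r2)) : Finset (Fin (n+r1+r2)) :=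
  univ.filter (fun y => f y = f x)

def partOf (f : Fin (n+r1+r2) → Fin (m+r2)) : Finset (Finset (Fin (n+r1+r2))) :=
  image (fiber n r1 r2 m f) univ

def Good (𝒜 : Finset (Finset (Fin (n+r1+r2)))) : Prop :=
  IsSetPartition 𝒜 ∧ DistinctBlocks 𝒜 {x | (x:ℕ) < r1} ∧
    DistinctBlocks 𝒜 {x | r1 ≤ (x:ℕ) ∧ (x:ℕ) < r1 + r2}

def specBlock (t : Finset (Fin (n+r1+r2))) : Prop :=
  ∃ s : Fin (n+r1+r2), (r1 ≤ (s:ℕ) ∧ (s:ℕ) < r1 + r2) ∧ s ∈ t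

noncomputable def NS (𝒜 : Finset (Finset (Fin (n+r1+r2)))) : Finset (Finset (Fin (n+r1+r2))) :=
  𝒜.filter (fun t => ¬ specBlock n r1 r2 t)

variable {n r1 r2 m}

lemma mem_fiber {f : Fin (n+r1+r2) → Fin (m+r2)} {x y : Fin (n+r1+r2)} :
    y ∈ fiber n r1 r2 m f x ↔ f y = f x := by simp [fiber]

lemma self_mem_fiber {f : Fin (n+r1+r2) → Fin (m+r2)} (x : Fin (n+r1+r2)) :
    x ∈ fiber n r1 r2 m f x := mem_fiber.2 rfl

lemma fiber_mem_partOf {f : Fin (n+r1+r2) → Fin (m+r2)} (x : Fin (n+r1+r2)) :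
    fiber n r1 r2 m f x ∈ partOf n r1 r2 m f := mem_image_of_mem _ (mem_univ x)

lemma partOf_isPartition (f : Fin (n+r1+r2) → Fin (m+r2)) :
    IsSetPartition (partOf n r1 r2 m f) := by
  constructor
  · intro t ht
    rw [partOf, mem_image] at ht
    obtain ⟨x, -, rfl⟩ := ht
    exact ⟨x, self_mem_fiber x⟩
  · intro x
    refine ⟨fiber n r1 r2 m f x, ⟨fiber_mem_partOf x, self_mem_fiber x⟩, ?_⟩
    rintro t ⟨ht, hxt⟩
    rw [partOf, mem_image] at ht
    obtain ⟨y, -, rfl⟩ := ht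
    have hfx : f x = f y := mem_fiber.1 hxt
    ext z
    rw [mem_fiber, mem_fiber, hfx]

lemma partOf_good {f : Fin (n+r1+r2) → Fin (m+r2)} (hf : Pf n r1 r2 m f) :
    Good n r1 r2 (partOf n r1 r2 m f) := by
  refine ⟨partOf_isPartition f, ?_, ?_⟩
  · intro a ha b hb hab t ht ⟨hat, hbt⟩
    rw [partOf, mem_image] at ht
    obtain ⟨y, -, rfl⟩ := ht
    exact hab (hf.1 a b ha hb ((mem_fiber.1 hat).trans (mem_fiber.1 hbt).symm))
  · intro a ha b hb hab t ht ⟨hat, hbt⟩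
    rw [partOf, mem_image] at ht
    obtain ⟨y, -, rfl⟩ := ht
    apply hab
    have hval := congrArg Fin.val ((mem_fiber.1 hat).trans (mem_fiber.1 hbt).symm)
    have ha1 : r1 ≤ (a:ℕ) := ha.1
    have ha2 : (a:ℕ) < r1 + r2 := ha.2
    have hb1 : r1 ≤ (b:ℕ) := hb.1
    have hb2 : (b:ℕ) < r1 + r2 := hb.2
    have h1 := hf.2 a ha1 ha2
    have h2 := hf.2 b hb1 hb2
    exact Fin.ext (by omega)

variable {𝒜 : Finset (Finset (Fin (n+r1+r2)))}

lemma no_two_specials (hG : Good n r1 r2 𝒜) {t : Finset (Fin (n+r1+r2))} (ht : t ∈ 𝒜)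
    {a b : Fin (n+r1+r2)} (ha : r1 ≤ (a:ℕ) ∧ (a:ℕ) < r1 + r2)
    (hb : r1 ≤ (b:ℕ) ∧ (b:ℕ) < r1 + r2) (hat : a ∈ t) (hbt : b ∈ t) : a = b := by
  by_contra hab
  exact hG.2.2 a ha b hb hab t ht ⟨hat, hbt⟩

lemma card_NS (hG : Good n r1 r2 𝒜) : 𝒜.card = (NS n r1 r2 𝒜).card + r2 := by
  classical
  have hsplit : (𝒜.filter (fun t => specBlock n r1 r2 t)).card + (NS n r1 r2 𝒜).card
      = 𝒜.card := by
    rw [NS, Finset.card_filter_add_card_filter_not]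
  -- the special blocks biject with Fin r2
  have hcard : (𝒜.filter (fun t => specBlock n r1 r2 t)).card = r2 := by
    have himg : 𝒜.filter (fun t => specBlock n r1 r2 t)
        = image (fun i : Fin r2 => blockOf hG.1 ⟨r1 + (i:ℕ), by omega⟩) univ := by
      ext t
      simp only [mem_filter, mem_image, mem_univ, true_and]
      constructor
      · rintro ⟨ht, s, hs, hst⟩
        refine ⟨⟨(s:ℕ) - r1, by omega⟩, ?_⟩
        rw [show (⟨r1 + ((s:ℕ) - r1), by omega⟩ : Fin (n+r1+r2)) = s from Fin.ext (by simp only [Fin.val_mk]; omega)]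
        exact blockOf_eq hG.1 ht hst
      · rintro ⟨i, rfl⟩
        refine ⟨blockOf_mem hG.1 _, ⟨r1 + (i:ℕ), by omega⟩, ⟨by simp only [Fin.val_mk]; omega, by simp only [Fin.val_mk]; omega⟩, ?_⟩
        exact mem_blockOf hG.1 _
    rw [himg, Finset.card_image_of_injective _ ?hinj, card_univ, Fintype.card_fin]
    intro i j hij
    simp only at hij
    have hi : (⟨r1 + (i:ℕ), by omega⟩ : Fin (n+r1+r2)) ∈ blockOf hG.1 ⟨r1 + (i:ℕ), by omega⟩ :=
      mem_blockOf hG.1 _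
    have hj : (⟨r1 + (j:ℕ), by omega⟩ : Fin (n+r1+r2)) ∈ blockOf hG.1 ⟨r1 + (j:ℕ), by omega⟩ :=
      mem_blockOf hG.1 _
    rw [hij] at hi
    have := no_two_specials hG (blockOf_mem hG.1 ⟨r1 + (j:ℕ), by omega⟩)
      (a := ⟨r1 + (i:ℕ), by omega⟩) (b := ⟨r1 + (j:ℕ), by omega⟩)
      ⟨by simp only [Fin.val_mk]; omega, by simp only [Fin.val_mk]; omega⟩ ⟨by simp only [Fin.val_mk]; omega, by simp only [Fin.val_mk]; omega⟩ hi hj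
    injection this with h'
    exact Fin.ext (by omega)
  omega

noncomputable def Fval (hG : Good n r1 r2 𝒜) (g : {t // t ∈ NS n r1 r2 𝒜} ↪ Fin m)
    (t : {t // t ∈ 𝒜}) : Fin (m+r2) :=
  if h : specBlock n r1 r2 t.1 then
    ⟨m + ((h.choose : ℕ) - r1), by have := h.choose_spec.1; omega⟩
  else Fin.castLE (by omega) (g ⟨t.1, Finset.mem_filter.2 ⟨t.2, h⟩⟩)

lemma Fval_inj (hG : Good n r1 r2 𝒜) (g : {t // t ∈ NS n r1 r2 𝒜} ↪ Fin m) :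
    Function.Injective (Fval hG g) := by
  intro t t' heq
  unfold Fval at heq
  split_ifs at heq with h h' h'
  · have hs := h.choose_spec
    have hs' := h'.choose_spec
    have hval := congrArg Fin.val heq
    simp only [Fin.val_mk] at hval
    have hss : h.choose = h'.choose := by
      have h1 := hs.1; have h2 := hs'.1
      exact Fin.ext (by omega)
    refine Subtype.ext (block_eq_block hG.1 t.2 t'.2 hs.2 ?_)
    rw [hss]
    exact hs'.2
  · have hlt := (g ⟨t'.1, Finset.mem_filter.2 ⟨t'.2, h'⟩⟩).isLt
    have hval := congrArg Fin.val heq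
    simp only [Fin.val_mk, Fin.coe_castLE] at hval
    have h1 := h.choose_spec.1
    omega
  · have hlt := (g ⟨t.1, Finset.mem_filter.2 ⟨t.2, h⟩⟩).isLt
    have hval := congrArg Fin.val heq
    simp only [Fin.val_mk, Fin.coe_castLE] at hval
    have h1 := h'.choose_spec.1
    omega
  · have hval := congrArg Fin.val heq
    simp only [Fin.coe_castLE] at hval
    have := g.injective (Fin.ext hval)
    injection this with h''
    exact Subtype.ext h''

noncomputable def invB (hG : Good n r1 r2 𝒜) (g : {t // t ∈ NS n r1 r2 𝒜} ↪ Fin m)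
    (x : Fin (n+r1+r2)) : Fin (m+r2) :=
  Fval hG g ⟨blockOf hG.1 x, blockOf_mem hG.1 x⟩

lemma invB_eq_iff (hG : Good n r1 r2 𝒜) (g : {t // t ∈ NS n r1 r2 𝒜} ↪ Fin m)
    {x y : Fin (n+r1+r2)} :
    invB hG g x = invB hG g y ↔ blockOf hG.1 x = blockOf hG.1 y := by
  constructor
  · intro h
    exact congrArg Subtype.val (Fval_inj hG g h)
  · intro h
    exact congrArg (Fval hG g) (Subtype.ext h)

lemma invB_spec (hG : Good n r1 r2 𝒜) (g : {t // t ∈ NS n r1 r2 𝒜} ↪ Fin m)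
    {x : Fin (n+r1+r2)} (hx1 : r1 ≤ (x:ℕ)) (hx2 : (x:ℕ) < r1 + r2) :
    (invB hG g x : ℕ) = m + ((x:ℕ) - r1) := by
  have hsp : specBlock n r1 r2 (blockOf hG.1 x) := ⟨x, ⟨hx1, hx2⟩, mem_blockOf hG.1 x⟩
  rw [invB, Fval, dif_pos hsp]
  have hs := hsp.choose_spec
  have : hsp.choose = x :=
    no_two_specials hG (blockOf_mem hG.1 x) hs.1 ⟨hx1, hx2⟩ hs.2 (mem_blockOf hG.1 x)
  simp only [Fin.val_mk, this]

lemma Pf_invB (hG : Good n r1 r2 𝒜) (g : {t // t ∈ NS n r1 r2 𝒜} ↪ Fin m) :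
    Pf n r1 r2 m (invB hG g) := by
  constructor
  · intro a b ha hb hab
    have hblk := (invB_eq_iff hG g).1 hab
    by_contra hne
    refine hG.2.1 a ha b hb hne (blockOf hG.1 b) (blockOf_mem hG.1 b) ⟨?_, mem_blockOf hG.1 b⟩
    rw [← hblk]
    exact mem_blockOf hG.1 a
  · intro x hx1 hx2
    exact invB_spec hG g hx1 hx2

lemma fiber_invB (hG : Good n r1 r2 𝒜) (g : {t // t ∈ NS n r1 r2 𝒜} ↪ Fin m)
    (x : Fin (n+r1+r2)) : fiber n r1 r2 m (invB hG g) x = blockOf hG.1 x := by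
  ext y
  rw [mem_fiber, invB_eq_iff hG g]
  constructor
  · intro h
    rw [← h]
    exact mem_blockOf hG.1 y
  · intro h
    exact blockOf_eq hG.1 (blockOf_mem hG.1 x) h

lemma partOf_invB (hG : Good n r1 r2 𝒜) (g : {t // t ∈ NS n r1 r2 𝒜} ↪ Fin m) :
    partOf n r1 r2 m (invB hG g) = 𝒜 := by
  ext t
  rw [partOf, mem_image]
  constructor
  · rintro ⟨x, -, rfl⟩
    rw [fiber_invB]
    exact blockOf_mem hG.1 x
  · intro ht
    refine ⟨rep t (hG.1.1 t ht), mem_univ _, ?_⟩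
    rw [fiber_invB]
    exact blockOf_eq hG.1 ht (rep_mem t (hG.1.1 t ht))

lemma fval_lt (hG : Good n r1 r2 𝒜) {f : Fin (n+r1+r2) → Fin (m+r2)}
    (hf : Pf n r1 r2 m f) (hp : partOf n r1 r2 m f = 𝒜)
    {t : Finset (Fin (n+r1+r2))} (ht : t ∈ NS n r1 r2 𝒜) {x : Fin (n+r1+r2)} (hx : x ∈ t) :
    (f x : ℕ) < m := by
  by_contra hge
  push_neg at hge
  have hlt := (f x).isLt
  set i := (f x : ℕ) - m with hi
  have hx0 : r1 + i < n + r1 + r2 := by omega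
  set x0 : Fin (n+r1+r2) := ⟨r1 + i, hx0⟩ with hx0def
  have hfx0 : (f x0 : ℕ) = m + i := by
    rw [hf.2 x0 (by simp [hx0def]) (by simp [hx0def]; omega)]
    simp [hx0def]
  have hfeq : f x0 = f x := Fin.ext (by omega)
  have hmem : x0 ∈ fiber n r1 r2 m f x := mem_fiber.2 hfeq
  have hfib : fiber n r1 r2 m f x ∈ 𝒜 := hp ▸ fiber_mem_partOf x
  have htA : t ∈ 𝒜 := (Finset.mem_filter.1 ht).1
  have hteq : t = fiber n r1 r2 m f x :=
    block_eq_block hG.1 htA hfib hx (self_mem_fiber x)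
  have : specBlock n r1 r2 t := ⟨x0, ⟨by simp [hx0def], by simp [hx0def]; omega⟩, hteq ▸ hmem⟩
  exact (Finset.mem_filter.1 ht).2 this

noncomputable def eB (hG : Good n r1 r2 𝒜) :
    {f : Fin (n+r1+r2) → Fin (m+r2) // Pf n r1 r2 m f ∧ partOf n r1 r2 m f = 𝒜}
      ≃ ({t // t ∈ NS n r1 r2 𝒜} ↪ Fin m) where
  toFun := fun ⟨f, hf, hp⟩ =>
    ⟨fun t => ⟨(f (rep t.1 (hG.1.1 t.1 (Finset.mem_filter.1 t.2).1)) : ℕ),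
        fval_lt hG hf hp t.2 (rep_mem t.1 (hG.1.1 t.1 (Finset.mem_filter.1 t.2).1))⟩, by
      intro t t' heq
      injection heq with hval
      set y := rep t.1 (hG.1.1 t.1 (Finset.mem_filter.1 t.2).1) with hy
      set y' := rep t'.1 (hG.1.1 t'.1 (Finset.mem_filter.1 t'.2).1) with hy'
      have hfeq : f y = f y' := Fin.ext hval
      have hfib : fiber n r1 r2 m f y = fiber n r1 r2 m f y' := by
        ext z; rw [mem_fiber, mem_fiber, hfeq]
      have h1 : t.1 = fiber n r1 r2 m f y :=
        block_eq_block hG.1 (Finset.mem_filter.1 t.2).1 (hp ▸ fiber_mem_partOf y)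
          (rep_mem _ _) (self_mem_fiber y)
      have h2 : t'.1 = fiber n r1 r2 m f y' :=
        block_eq_block hG.1 (Finset.mem_filter.1 t'.2).1 (hp ▸ fiber_mem_partOf y')
          (rep_mem _ _) (self_mem_fiber y')
      exact Subtype.ext (h1.trans (hfib.trans h2.symm))⟩
  invFun := fun g => ⟨invB hG g, Pf_invB hG g, partOf_invB hG g⟩
  left_inv := fun ⟨f, hf, hp⟩ => by
    apply Subtype.ext
    funext x
    dsimp only
    have hfibx : fiber n r1 r2 m f x = blockOf hG.1 x :=
      blockOf_eq hG.1 (hp ▸ fiber_mem_partOf x) (self_mem_fiber x) |>.symm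
    apply Fin.ext
    rw [invB, Fval]
    split_ifs with h
    · have hs := h.choose_spec
      have hsx : h.choose ∈ fiber n r1 r2 m f x := by rw [hfibx]; exact hs.2
      have : f h.choose = f x := mem_fiber.1 hsx
      have hv := hf.2 h.choose hs.1.1 hs.1.2
      simp only [Fin.val_mk]
      rw [← congrArg Fin.val this, hv]
    · simp only [Fin.coe_castLE, Fin.val_mk]
      have hrep : rep (blockOf hG.1 x) (hG.1.1 _ (blockOf_mem hG.1 x))
          ∈ fiber n r1 r2 m f x := by
        rw [hfibx]
        exact rep_mem _ _
      exact (congrArg Fin.val (mem_fiber.1 hrep))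
  right_inv := fun g => by
    apply DFunLike.ext
    intro t
    apply Fin.ext
    simp only [Function.Embedding.coeFn_mk]
    show ((invB hG g (rep t.1 (hG.1.1 t.1 (Finset.mem_filter.1 t.2).1)) : Fin (m+r2)) : ℕ) = (g t : ℕ)
    have hblk : blockOf hG.1 (rep t.1 (hG.1.1 t.1 (Finset.mem_filter.1 t.2).1)) = t.1 :=
      blockOf_eq hG.1 (Finset.mem_filter.1 t.2).1 (rep_mem _ _)
    rw [show invB hG g (rep t.1 (hG.1.1 t.1 (Finset.mem_filter.1 t.2).1))
        = Fval hG g ⟨t.1, (Finset.mem_filter.1 t.2).1⟩ from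
      congrArg (Fval hG g) (Subtype.ext hblk)]
    rw [Fval, dif_neg (Finset.mem_filter.1 t.2).2]
    simp only [Fin.coe_castLE]

variable (n r1 r2 m)

def invF (g : Fin r1 ↪ Fin (m+r2)) (hfn : Fin n → Fin (m+r2)) (x : Fin (n+r1+r2)) :
    Fin (m+r2) :=
  if h1 : (x:ℕ) < r1 then g ⟨x, h1⟩
  else if h2 : (x:ℕ) < r1 + r2 then ⟨m + ((x:ℕ) - r1), by omega⟩
  else hfn ⟨(x:ℕ) - (r1+r2), by omega⟩

variable {n r1 r2 m}

lemma invF_low {g hfn} {x : Fin (n+r1+r2)} (h : (x:ℕ) < r1) :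
    invF n r1 r2 m g hfn x = g ⟨x, h⟩ := dif_pos h

lemma invF_mid {g hfn} {x : Fin (n+r1+r2)} (h1 : r1 ≤ (x:ℕ)) (h2 : (x:ℕ) < r1 + r2) :
    invF n r1 r2 m g hfn x = ⟨m + ((x:ℕ) - r1), by omega⟩ := by
  rw [invF, dif_neg (by omega), dif_pos h2]

lemma invF_high {g hfn} {x : Fin (n+r1+r2)} (h : r1 + r2 ≤ (x:ℕ)) :
    invF n r1 r2 m g hfn x = hfn ⟨(x:ℕ) - (r1+r2), by omega⟩ := by
  rw [invF, dif_neg (by omega), dif_neg (by omega)]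

variable (n r1 r2 m)

noncomputable def eA : {f : Fin (n+r1+r2) → Fin (m+r2) // Pf n r1 r2 m f} ≃
    (Fin r1 ↪ Fin (m+r2)) × (Fin n → Fin (m+r2)) where
  toFun := fun ⟨f, hf⟩ =>
    (⟨fun i => f ⟨i, by omega⟩, fun i i' hii => by
      have h := hf.1 ⟨i, by omega⟩ ⟨i', by omega⟩ i.2 i'.2 hii
      injection h with h'
      exact Fin.ext h'⟩,
     fun i => f ⟨r1 + r2 + i, by omega⟩)
  invFun := fun ⟨g, hfn⟩ =>
    ⟨invF n r1 r2 m g hfn, by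
      constructor
      · intro a b ha hb hab
        rw [invF_low ha, invF_low hb] at hab
        have h := g.injective hab
        injection h with h'
        exact Fin.ext h'
      · intro x hx1 hx2
        rw [invF_mid hx1 hx2]⟩
  left_inv := fun ⟨f, hf⟩ => by
    apply Subtype.ext
    funext x
    dsimp only
    rcases lt_or_ge (x:ℕ) r1 with h1 | h1
    · rw [invF_low h1]; congr 1
    · rcases lt_or_ge (x:ℕ) (r1+r2) with h2 | h2
      · rw [invF_mid h1 h2]
        exact Fin.ext (hf.2 x h1 h2).symm
      · rw [invF_high h2]
        congr 1
        exact Fin.ext (by simp; omega)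
  right_inv := fun ⟨g, hfn⟩ => by
    refine Prod.ext ?_ ?_
    · apply DFunLike.ext
      intro i
      simp only [Function.Embedding.coeFn_mk]
      show invF n r1 r2 m g hfn ⟨i, by omega⟩ = g i
      rw [invF_low i.2]
    · funext i
      dsimp only
      rw [invF_high (by simp only [Fin.val_mk]; omega)]
      congr 1
      exact Fin.ext (by simp)

lemma cardA : Nat.card {f : Fin (n+r1+r2) → Fin (m+r2) // Pf n r1 r2 m f}
    = (m+r2).descFactorial r1 * (m+r2)^n := by
  rw [Nat.card_congr (eA n r1 r2 m), Nat.card_prod, Nat.card_eq_fintype_card,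
    Nat.card_eq_fintype_card, Fintype.card_embedding_eq, Fintype.card_fun]
  simp


variable {n r1 r2 m}

lemma cardB (hG : Good n r1 r2 𝒜) :
    Nat.card {f : Fin (n+r1+r2) → Fin (m+r2) // Pf n r1 r2 m f ∧ partOf n r1 r2 m f = 𝒜}
      = m.descFactorial (𝒜.card - r2) := by
  rw [Nat.card_congr (eB hG), Nat.card_eq_fintype_card, Fintype.card_embedding_eq]
  have h1 : Fintype.card {t // t ∈ NS n r1 r2 𝒜} = (NS n r1 r2 𝒜).card := Fintype.card_coe _
  have h2 := card_NS hG
  rw [h1, Fintype.card_fin]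
  congr 1
  omega


variable (n r1 r2 m)

lemma key : (m + r2) ^ n * (m + r2).descFactorial r1
    = ∑ j ∈ range (n + r1 + 1), rrStirling r1 r2 n j * m.descFactorial j := by
  classical
  -- LHS = number of colorings
  have hA : Nat.card {f : Fin (n+r1+r2) → Fin (m+r2) // Pf n r1 r2 m f}
      = (m+r2).descFactorial r1 * (m+r2)^n := cardA n r1 r2 m
  -- fiber decomposition over good partitions
  set π : {f : Fin (n+r1+r2) → Fin (m+r2) // Pf n r1 r2 m f}
      → {𝒜 : Finset (Finset (Fin (n+r1+r2))) // Good n r1 r2 𝒜} :=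
    fun fp => ⟨partOf n r1 r2 m fp.1, partOf_good fp.2⟩ with hπ
  have e1 := (Equiv.sigmaFiberEquiv π).symm
  have e2 : ∀ A : {𝒜 : Finset (Finset (Fin (n+r1+r2))) // Good n r1 r2 𝒜},
      {fp : {f : Fin (n+r1+r2) → Fin (m+r2) // Pf n r1 r2 m f} // π fp = A}
      ≃ {f : Fin (n+r1+r2) → Fin (m+r2) // Pf n r1 r2 m f ∧ partOf n r1 r2 m f = A.1} := by
    intro A
    exact
      { toFun := fun fp => ⟨fp.1.1, fp.1.2, congrArg Subtype.val fp.2⟩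
        invFun := fun f => ⟨⟨f.1, f.2.1⟩, Subtype.ext f.2.2⟩
        left_inv := fun fp => rfl
        right_inv := fun f => rfl }
  have hstep : Nat.card {f : Fin (n+r1+r2) → Fin (m+r2) // Pf n r1 r2 m f}
      = ∑ A : {𝒜 : Finset (Finset (Fin (n+r1+r2))) // Good n r1 r2 𝒜},
          m.descFactorial (A.1.card - r2) := by
    rw [Nat.card_congr e1, Nat.card_eq_fintype_card, Fintype.card_sigma]
    congr 1
    funext A
    rw [← Nat.card_eq_fintype_card, Nat.card_congr (e2 A), cardB A.2]
  -- regroup by number of blocks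
  have hbound : ∀ A : {𝒜 : Finset (Finset (Fin (n+r1+r2))) // Good n r1 r2 𝒜},
      A.1.card - r2 ∈ range (n + r1 + 1) := by
    intro A
    have h1 := card_le_of_partition A.2.1
    rw [mem_range]
    omega
  have hregroup : ∑ A : {𝒜 : Finset (Finset (Fin (n+r1+r2))) // Good n r1 r2 𝒜},
      m.descFactorial (A.1.card - r2)
      = ∑ j ∈ range (n + r1 + 1), rrStirling r1 r2 n j * m.descFactorial j := by
    rw [← Finset.sum_fiberwise_of_maps_to (fun A _ => hbound A)
      (fun A => m.descFactorial (A.1.card - r2))]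
    apply Finset.sum_congr rfl
    intro j hj
    have : ∀ A ∈ univ.filter
        (fun A : {𝒜 : Finset (Finset (Fin (n+r1+r2))) // Good n r1 r2 𝒜} => A.1.card - r2 = j),
        m.descFactorial (A.1.card - r2) = m.descFactorial j := by
      intro A hA
      rw [(Finset.mem_filter.1 hA).2]
    rw [Finset.sum_congr rfl this, Finset.sum_const, smul_eq_mul]
    congr 1
    -- count good partitions with j + r2 blocks
    rw [← Fintype.card_subtype]
    rw [rrStirling, Nat.card_eq_fintype_card]
    apply Fintype.card_congr
    exact
      { toFun := fun A => ⟨A.1.1, A.1.2.1, by have := card_NS A.1.2; have := A.2; omega,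
          A.1.2.2.1, A.1.2.2.2⟩
        invFun := fun B => ⟨⟨B.1, B.2.1, B.2.2.2.1, B.2.2.2.2⟩, by
          have hc := B.2.2.1
          show B.1.card - r2 = j
          omega⟩
        left_inv := fun A => rfl
        right_inv := fun B => rfl }
  rw [← hregroup, ← hstep, hA, Nat.mul_comm]

end Comb

theorem mainReduction (n r₁ r₂ : ℕ)
    (key : ∀ m : ℕ, (m + r₂) ^ n * (m + r₂).descFactorial r₁
      = ∑ j ∈ range (n + r₁ + 1), rrStirling r₁ r₂ n j * m.descFactorial j) (z : ℝ) :
    Summable (fun k : ℕ =>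
      ((k + r₂ : ℕ) : ℝ) ^ n * (∏ i ∈ range r₁, (((k + r₂ : ℕ) : ℝ) - i)) * z ^ k /
        (Nat.factorial k)) ∧
    rrBell r₁ r₂ n z =
      Real.exp (-z) * ∑' k : ℕ,
        ((k + r₂ : ℕ) : ℝ) ^ n * (∏ i ∈ range r₁, (((k + r₂ : ℕ) : ℝ) - i)) * z ^ k /
          (Nat.factorial k) := by
  have hterm : ∀ k : ℕ,
      ((k + r₂ : ℕ) : ℝ) ^ n * (∏ i ∈ range r₁, (((k + r₂ : ℕ) : ℝ) - i)) * z ^ k /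
        (Nat.factorial k)
      = ∑ j ∈ range (n + r₁ + 1),
          (rrStirling r₁ r₂ n j : ℝ) * ((Nat.descFactorial k j : ℝ) * z ^ k / k.factorial) := by
    intro k
    rw [prod_range_cast_sub]
    have hk := key k
    have hc : (((k + r₂) ^ n * (k + r₂).descFactorial r₁ : ℕ) : ℝ)
        = ((∑ j ∈ range (n + r₁ + 1), rrStirling r₁ r₂ n j * k.descFactorial j : ℕ) : ℝ) := by
      exact_mod_cast congrArg Nat.cast hk
    push_cast at hc ⊢
    rw [mul_div_assoc, hc, Finset.sum_mul]
    exact Finset.sum_congr rfl fun j _ => by ring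
  have hsummable : Summable (fun k : ℕ =>
      ((k + r₂ : ℕ) : ℝ) ^ n * (∏ i ∈ range r₁, (((k + r₂ : ℕ) : ℝ) - i)) * z ^ k /
        (Nat.factorial k)) := by
    rw [show (fun k : ℕ =>
      ((k + r₂ : ℕ) : ℝ) ^ n * (∏ i ∈ range r₁, (((k + r₂ : ℕ) : ℝ) - i)) * z ^ k /
        (Nat.factorial k)) = fun k => ∑ j ∈ range (n + r₁ + 1),
          (rrStirling r₁ r₂ n j : ℝ) * ((Nat.descFactorial k j : ℝ) * z ^ k / k.factorial)
      from funext hterm]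
    exact summable_sum fun j _ => (summable_descF j z).mul_left _
  refine ⟨hsummable, ?_⟩
  have htsum : ∑' k : ℕ,
      ((k + r₂ : ℕ) : ℝ) ^ n * (∏ i ∈ range r₁, (((k + r₂ : ℕ) : ℝ) - i)) * z ^ k /
        (Nat.factorial k)
      = ∑ j ∈ range (n + r₁ + 1), (rrStirling r₁ r₂ n j : ℝ) * (z ^ j * Real.exp z) := by
    rw [tsum_congr hterm, Summable.tsum_finsetSum (fun j _ => ((summable_descF j z).mul_left _))]
    apply Finset.sum_congr rfl
    intro j _
    rw [tsum_mul_left, tsum_descF]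
  rw [htsum, rrBell, Finset.mul_sum]
  apply Finset.sum_congr rfl
  intro j _
  rw [show Real.exp (-z) * ((rrStirling r₁ r₂ n j : ℝ) * (z ^ j * Real.exp z))
    = (rrStirling r₁ r₂ n j : ℝ) * z ^ j * (Real.exp (-z) * Real.exp z) from by ring,
    ← Real.exp_add, neg_add_cancel, Real.exp_zero, mul_one]


end RRaux

/-- $B_n(z;r_1,r_2)=e^{-z}\sum_{k\ge0}(k+r_2)^n (k+r_2)^{\underline{r_1}} z^k/k!$. -/
theorem rrBell_exponential_formula (n r₁ r₂ : ℕ) (h : r₁ ≤ r₂) (z : ℝ) :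
    Summable (fun k : ℕ =>
      ((k + r₂ : ℕ) : ℝ) ^ n * (∏ i ∈ range r₁, (((k + r₂ : ℕ) : ℝ) - i)) * z ^ k /
        (Nat.factorial k)) ∧
    rrBell r₁ r₂ n z =
      Real.exp (-z) * ∑' k : ℕ,
        ((k + r₂ : ℕ) : ℝ) ^ n * (∏ i ∈ range r₁, (((k + r₂ : ℕ) : ℝ) - i)) * z ^ k /
          (Nat.factorial k) := by
  exact RRaux.mainReduction n r₁ r₂ (fun m => RRaux.key n r₁ r₂ m) z
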